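/- Let ρ be a density operator on the bipartite Hilbert space H = EuclideanSpace ℂ (Fin m × Fin n) (a positive semidefinite operator of trace one) that does not lie in the convex hull of the set of rank-one orthogonal projections onto unit product vectors. Then there exists a self-adjoint operator L on H such that tr(L ρ) > g_max(L), where g_max(L) is the supremum of ⟨a⊗b, L (a⊗b)⟩ over all pairs of unit vectors a, b. (Every entangled state is detected by some entanglement witness W = g_max·1 − L, i.e., criterion tr(Lρ) > g_max is necessary and sufficient for entanglement.) -/

import Mathlib

open scoped ComplexInnerProductSpace Matrix

/-- The product vector `a ⊗ b` in the bipartite space, `(a ⊗ b)(i, k) = a i * b k`. -/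
noncomputable def tp {m n : ℕ} (a : EuclideanSpace ℂ (Fin m)) (b : EuclideanSpace ℂ (Fin n)) :
    EuclideanSpace ℂ (Fin m × Fin n) :=
  WithLp.toLp 2 (fun p => a p.1 * b p.2)

section AuxLemmas

variable {N : Type*} [Fintype N] [DecidableEq N]

lemma traceCLM_eq (T : EuclideanSpace ℂ N →L[ℂ] EuclideanSpace ℂ N) :
    LinearMap.trace ℂ _ T.toLinearMap = Matrix.trace ((Matrix.toEuclideanCLM (𝕜 := ℂ)).symm T) := by
  have h := (Matrix.toEuclideanCLM (𝕜 := ℂ) (n := N)).apply_symm_apply T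
  set B := (Matrix.toEuclideanCLM (𝕜 := ℂ) (n := N)).symm T with hB
  conv_lhs => rw [← h]
  rw [show (Matrix.toEuclideanCLM (𝕜 := ℂ) (n := N) B).toLinearMap = Matrix.toEuclideanLin B from rfl]
  rw [Matrix.toEuclideanLin_eq_toLin_orthonormal,
    LinearMap.trace_eq_matrix_trace ℂ (EuclideanSpace.basisFun N ℂ).toBasis,
    LinearMap.toMatrix_toLin]

lemma trace_rankOne (v w : EuclideanSpace ℂ N) :
    LinearMap.trace ℂ _ ((innerSL ℂ v).smulRight w).toLinearMap = ⟪v, w⟫ := by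
  rw [LinearMap.trace_eq_matrix_trace ℂ (EuclideanSpace.basisFun N ℂ).toBasis, Matrix.trace]
  simp only [Matrix.diag_apply, LinearMap.toMatrix_apply, OrthonormalBasis.coe_toBasis,
    EuclideanSpace.basisFun_apply, ContinuousLinearMap.coe_coe,
    ContinuousLinearMap.smulRight_apply, innerSL_apply_apply, EuclideanSpace.inner_single_right,
    OrthonormalBasis.coe_toBasis_repr_apply, EuclideanSpace.basisFun_repr]
  simp [PiLp.inner_apply, PiLp.smul_apply, smul_eq_mul, mul_comm]

lemma repr_functional (h : Matrix N N ℂ →ₗ[ℝ] ℝ) :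
    ∃ A : Matrix N N ℂ, ∀ B, h B = ((A * B).trace).re := by
  refine ⟨Matrix.of fun q p => ((h (Matrix.single p q 1) : ℝ) : ℂ) -
      ((h (Matrix.single p q Complex.I) : ℝ) : ℂ) * Complex.I, fun B => ?_⟩
  have hB : B = ∑ p : N, ∑ q : N,
      ((B p q).re • Matrix.single p q 1 + (B p q).im • Matrix.single p q Complex.I) := by
    ext i j
    simp only [Matrix.sum_apply, Matrix.add_apply, Matrix.smul_apply, Matrix.single,
      Matrix.of_apply, smul_ite, smul_zero, smul_eq_mul]
    rw [Finset.sum_eq_single i, Finset.sum_eq_single j] <;>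
      simp +contextual [Complex.ext_iff]
  conv_lhs => rw [hB]
  simp only [map_sum, map_add, map_smul, smul_eq_mul, Matrix.trace, Matrix.diag_apply,
    Matrix.mul_apply, Complex.re_sum, Matrix.of_apply]
  rw [Finset.sum_comm]
  refine Finset.sum_congr rfl fun p _ => Finset.sum_congr rfl fun q _ => ?_
  simp only [Complex.mul_re, Complex.sub_re, Complex.ofReal_re, Complex.mul_im, Complex.sub_im,
    Complex.ofReal_im, Complex.I_re, Complex.I_im]
  ring

end AuxLemmas

lemma isCompact_convexHull_of_isCompact {V : Type*} [NormedAddCommGroup V] [NormedSpace ℝ V]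
    [FiniteDimensional ℝ V] {s : Set V} (hs : IsCompact s) : IsCompact (convexHull ℝ s) := by
  classical
  rcases s.eq_empty_or_nonempty with rfl | ⟨x₀, hx₀⟩
  · simp [convexHull_empty, isCompact_empty]
  set k := Module.finrank ℝ V + 1 with hk
  have himage : convexHull ℝ s =
      (fun p : (Fin k → ℝ) × (Fin k → V) => ∑ j, p.1 j • p.2 j) ''
        (stdSimplex ℝ (Fin k) ×ˢ Set.univ.pi fun _ => s) := by
    apply Set.Subset.antisymm
    · intro x hx
      obtain ⟨ι, hι, z, w, hzs, hai, hw0, hw1, hwz⟩ := eq_pos_convex_span_of_mem_convexHull hx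
      have hcard : Fintype.card ι ≤ k := by
        refine le_trans hai.card_le_finrank_succ ?_
        exact Nat.add_le_add_right (Submodule.finrank_le _) 1
      obtain ⟨g⟩ : Nonempty (ι ↪ Fin k) := Function.Embedding.nonempty_of_card_le (by simpa using hcard)
      set w' : Fin k → ℝ := Function.extend g w 0 with hw'
      set z' : Fin k → V := Function.extend g z fun _ => x₀ with hz'
      have hext0 : ∀ j, j ∉ Finset.univ.image g → w' j = 0 := by
        intro j hj
        rw [hw', Function.extend_apply']
        · rfl
        · rintro ⟨i, rfl⟩; exact hj (Finset.mem_image_of_mem g (Finset.mem_univ i))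
      have h1 : ∑ j, w' j = 1 := by
        calc ∑ j, w' j = ∑ j ∈ Finset.univ.image g, w' j :=
              (Finset.sum_subset (Finset.subset_univ _) fun j _ hj => hext0 j hj).symm
          _ = ∑ i, w' (g i) := Finset.sum_image (by simp [g.injective.eq_iff, g.injective])
          _ = ∑ i, w i := by simp [hw', g.injective.extend_apply]
          _ = 1 := hw1
      have h2 : ∑ j, w' j • z' j = x := by
        calc ∑ j, w' j • z' j = ∑ j ∈ Finset.univ.image g, w' j • z' j :=
              (Finset.sum_subset (Finset.subset_univ _) fun j _ hj => by
                rw [hext0 j hj, zero_smul]).symm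
          _ = ∑ i, w' (g i) • z' (g i) := Finset.sum_image (by simp [g.injective.eq_iff, g.injective])
          _ = ∑ i, w i • z i := by simp [hw', hz', g.injective.extend_apply]
          _ = x := hwz
      refine ⟨(w', z'), ⟨⟨fun j => ?_, h1⟩, fun j _ => ?_⟩, h2⟩
      · show 0 ≤ w' j
        by_cases hj : ∃ i, g i = j
        · obtain ⟨i, rfl⟩ := hj
          rw [hw', g.injective.extend_apply]
          exact (hw0 i).le
        · rw [hw', Function.extend_apply' _ _ _ hj]; rfl
      · show z' j ∈ s
        by_cases hj : ∃ i, g i = j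
        · obtain ⟨i, rfl⟩ := hj
          rw [hz', g.injective.extend_apply]
          exact hzs (Set.mem_range_self i)
        · rw [hz', Function.extend_apply' _ _ _ hj]; exact hx₀
    · rintro x ⟨⟨w, z⟩, ⟨hw, hz⟩, rfl⟩
      exact (convex_convexHull ℝ s).sum_mem (fun j _ => hw.1 j) hw.2
        fun j _ => subset_convexHull ℝ s (hz j (Set.mem_univ j))
  rw [himage]
  refine IsCompact.image ?_ ?_
  · exact (isCompact_stdSimplex _ _).prod (isCompact_univ_pi fun _ => hs)
  · exact continuous_finset_sum _ fun j _ =>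
      ((continuous_apply j).comp continuous_fst).smul ((continuous_apply j).comp continuous_snd)

lemma norm_tp {m n : ℕ} (a : EuclideanSpace ℂ (Fin m)) (b : EuclideanSpace ℂ (Fin n)) :
    ‖tp a b‖ = ‖a‖ * ‖b‖ := by
  rw [EuclideanSpace.norm_eq, EuclideanSpace.norm_eq, EuclideanSpace.norm_eq,
    ← Real.sqrt_mul (by positivity), Finset.sum_mul_sum]
  congr 1
  rw [Fintype.sum_prod_type]
  simp [tp, mul_pow]

lemma proj_eq {E : Type*} [NormedAddCommGroup E] [InnerProductSpace ℂ E] [CompleteSpace E]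
    [FiniteDimensional ℂ E] {v : E} (hv : ‖v‖ = 1) :
    (ℂ ∙ v).subtypeL ∘L (ℂ ∙ v).orthogonalProjection = (innerSL ℂ v).smulRight v := by
  ext x
  show (ℂ ∙ v).starProjection x = _
  simp [Submodule.starProjection_singleton, hv]

lemma cont_rankOne {E : Type*} [NormedAddCommGroup E] [InnerProductSpace ℂ E] :
    Continuous fun v : E => (innerSL ℂ v).smulRight v :=
  (isBoundedBilinearMap_smulRight (𝕜 := ℂ)).continuous.comp
    ((innerSL ℂ).continuous.prodMk continuous_id)

lemma cont_tp {m n : ℕ} :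
    Continuous fun p : EuclideanSpace ℂ (Fin m) × EuclideanSpace ℂ (Fin n) => tp p.1 p.2 := by
  have h : Continuous fun p : EuclideanSpace ℂ (Fin m) × EuclideanSpace ℂ (Fin n) =>
      (WithLp.equiv 2 (Fin m × Fin n → ℂ)).symm (fun q : Fin m × Fin n => p.1 q.1 * p.2 q.2) := by
    refine (PiLp.continuous_toLp 2 _).comp (continuous_pi fun q => ?_)
    exact ((continuous_apply q.1).comp ((PiLp.continuous_ofLp 2 _).comp continuous_fst)).mul
      ((continuous_apply q.2).comp ((PiLp.continuous_ofLp 2 _).comp continuous_snd))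
  exact h

set_option maxHeartbeats 2000000 in
set_option synthInstance.maxHeartbeats 400000 in
/-- **Every entangled state is detected by some witness.**  Let `ρ` be a density operator
on the bipartite space (self-adjoint, positive semidefinite, trace one) that does not lie
in the convex hull of rank-one orthogonal projections onto unit product vectors.  Then
there is a self-adjoint operator `L` with `tr(L ρ) > g_max(L)`, where `g_max(L)` is the
supremum of `⟨a⊗b, L (a⊗b)⟩` over pairs of unit vectors. -/
theorem entangled_state_detected {m n : ℕ} (hm : 1 ≤ m) (hn : 1 ≤ n)
    (ρ : EuclideanSpace ℂ (Fin m × Fin n) →L[ℂ] EuclideanSpace ℂ (Fin m × Fin n))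
    (hρsa : IsSelfAdjoint ρ)
    (hρpos : ∀ x : EuclideanSpace ℂ (Fin m × Fin n), 0 ≤ (⟪x, ρ x⟫).re)
    (hρtr : LinearMap.trace ℂ _ ρ.toLinearMap = 1)
    (hent : ρ ∉ convexHull ℝ
      {T : EuclideanSpace ℂ (Fin m × Fin n) →L[ℂ] EuclideanSpace ℂ (Fin m × Fin n) |
        ∃ (a : EuclideanSpace ℂ (Fin m)) (b : EuclideanSpace ℂ (Fin n)),
          ‖a‖ = 1 ∧ ‖b‖ = 1 ∧
          T = (ℂ ∙ tp a b).subtypeL ∘L (ℂ ∙ tp a b).orthogonalProjection}) :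
    ∃ L : EuclideanSpace ℂ (Fin m × Fin n) →L[ℂ] EuclideanSpace ℂ (Fin m × Fin n),
      IsSelfAdjoint L ∧
      sSup {r : ℝ | ∃ (a : EuclideanSpace ℂ (Fin m)) (b : EuclideanSpace ℂ (Fin n)),
          ‖a‖ = 1 ∧ ‖b‖ = 1 ∧ r = (⟪tp a b, L (tp a b)⟫).re}
        < (LinearMap.trace ℂ _ (L ∘L ρ).toLinearMap).re := by
  classical
  set S : Set (EuclideanSpace ℂ (Fin m × Fin n) →L[ℂ] EuclideanSpace ℂ (Fin m × Fin n)) :=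
    {T | ∃ (a : EuclideanSpace ℂ (Fin m)) (b : EuclideanSpace ℂ (Fin n)),
      ‖a‖ = 1 ∧ ‖b‖ = 1 ∧
      T = (ℂ ∙ tp a b).subtypeL ∘L (ℂ ∙ tp a b).orthogonalProjection} with hS
  -- compactness of S
  have hSeq : S = (fun v : EuclideanSpace ℂ (Fin m × Fin n) => (innerSL ℂ v).smulRight v) ''
      ((fun p : EuclideanSpace ℂ (Fin m) × EuclideanSpace ℂ (Fin n) => tp p.1 p.2) ''
        (Metric.sphere 0 1 ×ˢ Metric.sphere 0 1)) := by
    ext T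
    constructor
    · rintro ⟨a, b, ha, hb, rfl⟩
      refine ⟨tp a b, ⟨(a, b), ?_, rfl⟩, ?_⟩
      · simp [Set.mem_prod, mem_sphere_iff_norm, ha, hb]
      · exact (proj_eq (by rw [norm_tp, ha, hb, one_mul])).symm
    · rintro ⟨v, ⟨⟨a, b⟩, hab, rfl⟩, rfl⟩
      simp only [Set.mem_prod, mem_sphere_iff_norm, sub_zero] at hab
      exact ⟨a, b, hab.1, hab.2, (proj_eq (by simp [norm_tp, hab.1, hab.2])).symm⟩
  have hScompact : IsCompact S := by
    rw [hSeq]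
    exact ((((isCompact_sphere _ _).prod (isCompact_sphere _ _)).image cont_tp).image cont_rankOne)
  have hclosed : IsClosed (convexHull ℝ S) :=
    (isCompact_convexHull_of_isCompact hScompact).isClosed
  obtain ⟨f, u, hfS, hfρ⟩ :=
    geometric_hahn_banach_closed_point (convex_convexHull ℝ S) hclosed hent
  -- representation of f
  set φ := Matrix.toEuclideanCLM (𝕜 := ℂ) (n := Fin m × Fin n) with hφ
  have hsmul : ∀ (r : ℝ) (B : Matrix (Fin m × Fin n) (Fin m × Fin n) ℂ),
      φ (r • B) = r • φ B := by
    intro r B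
    rw [show (r • B : Matrix _ _ ℂ) = ((r : ℂ) • B) from (Complex.coe_smul r B).symm, map_smul]
    ext x
    simp [Complex.coe_smul]
  obtain ⟨A, hA⟩ := repr_functional
    { toFun := fun B => f (φ B)
      map_add' := fun B C => by
        show f (φ (B + C)) = f (φ B) + f (φ C); rw [map_add, map_add]
      map_smul' := fun r B => by
        show f (φ (r • B)) = r • f (φ B); rw [hsmul, map_smul] }
  have hfT : ∀ T, f T = ((A * φ.symm T).trace).re := by
    intro T
    have h := hA (φ.symm T)
    simp only [LinearMap.coe_mk, AddHom.coe_mk] at h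
    rwa [StarAlgEquiv.apply_symm_apply] at h
  -- the witness
  set L := (2⁻¹ : ℂ) • (φ A + star (φ A)) with hL
  have hLsa : IsSelfAdjoint L := by
    rw [IsSelfAdjoint, hL, star_smul,
      star_add (R := EuclideanSpace ℂ (Fin m × Fin n) →L[ℂ] EuclideanSpace ℂ (Fin m × Fin n)), star_star]
    rw [show star (2⁻¹ : ℂ) = (2⁻¹ : ℂ) by simp [Complex.ext_iff]]
    rw [add_comm]
  have hkey : ∀ T, IsSelfAdjoint T →
      (LinearMap.trace ℂ _ (L ∘L T).toLinearMap).re = f T := by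
    intro T hT
    rw [show L ∘L T = L * T from rfl, traceCLM_eq, map_mul]
    have hφL : φ.symm L = (2⁻¹ : ℂ) • (A + Aᴴ) := by
      rw [hL, map_smul, map_add, map_star, StarAlgEquiv.symm_apply_apply,
        Matrix.star_eq_conjTranspose]
    have hBT : (φ.symm T)ᴴ = φ.symm T := by
      rw [← Matrix.star_eq_conjTranspose, ← map_star, hT.star_eq]
    rw [hφL, Matrix.smul_mul, Matrix.add_mul, Matrix.trace_smul, Matrix.trace_add]
    have hconj : (Aᴴ * φ.symm T).trace = star ((A * φ.symm T).trace) := by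
      conv_lhs => rw [← hBT, ← Matrix.conjTranspose_mul, Matrix.trace_conjTranspose,
        Matrix.trace_mul_comm]
    rw [hconj, hfT T]
    generalize (A * φ.symm T).trace = t
    rw [smul_eq_mul]
    rw [show t + star t = ((2 * t.re : ℝ) : ℂ) by
      rw [Complex.star_def, Complex.add_conj]
    ]
    simp
  refine ⟨L, hLsa, ?_⟩
  have hub : ∀ r ∈ {r : ℝ | ∃ (a : EuclideanSpace ℂ (Fin m)) (b : EuclideanSpace ℂ (Fin n)),
      ‖a‖ = 1 ∧ ‖b‖ = 1 ∧ r = (⟪tp a b, L (tp a b)⟫).re}, r ≤ u := by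
    rintro r ⟨a, b, ha, hb, rfl⟩
    have hv : ‖tp a b‖ = 1 := by rw [norm_tp, ha, hb, one_mul]
    set P := (ℂ ∙ tp a b).subtypeL ∘L (ℂ ∙ tp a b).orthogonalProjection with hP
    have hPsa : IsSelfAdjoint P := isSelfAdjoint_starProjection _
    have hmem : P ∈ S := ⟨a, b, ha, hb, rfl⟩
    have h1 : f P < u := hfS P (subset_convexHull ℝ S hmem)
    have h3 : LinearMap.trace ℂ _ (L ∘L P).toLinearMap = ⟪tp a b, L (tp a b)⟫ := by
      rw [hP, proj_eq hv]
      rw [show L ∘L (innerSL ℂ (tp a b)).smulRight (tp a b)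
          = (innerSL ℂ (tp a b)).smulRight (L (tp a b)) from by ext x; simp]
      rw [trace_rankOne]
    have h2 : (⟪tp a b, L (tp a b)⟫).re = f P := by
      rw [← h3, hkey P hPsa]
    rw [h2]
    exact h1.le
  have hne : ({r : ℝ | ∃ (a : EuclideanSpace ℂ (Fin m)) (b : EuclideanSpace ℂ (Fin n)),
      ‖a‖ = 1 ∧ ‖b‖ = 1 ∧ r = (⟪tp a b, L (tp a b)⟫).re}).Nonempty := by
    refine ⟨_, EuclideanSpace.single ⟨0, hm⟩ 1, EuclideanSpace.single ⟨0, hn⟩ 1, ?_, ?_, rfl⟩ <;>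
      simp [EuclideanSpace.norm_single]
  have hfin := (csSup_le hne hub).trans_lt hfρ
  rwa [← hkey ρ hρsa] at hfin
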